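/- Denoiser asymptotics: under an affine Gaussian path with data density p₁ Lipschitz and bounded below by a positive constant near x/α_t, the denoiser satisfies x̂₁(x,t) = x/α_t + O(σ_t) as t → 1 (where σ_t → 0, α_t → 1). -/

import Mathlib

open Real MeasureTheory Filter

/-- Gaussian density on `ℝ^d` with mean `μ` and covariance `s² I`. -/
noncomputable def gaussDensity (d : ℕ) (μ : EuclideanSpace ℝ (Fin d)) (s : ℝ)
    (y : EuclideanSpace ℝ (Fin d)) : ℝ :=
  (2 * π * s ^ 2) ^ (-(d : ℝ) / 2) * Real.exp (-‖y - μ‖ ^ 2 / (2 * s ^ 2))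

/-- The AGPP marginal density `p_t(x)`. -/
noncomputable def marginal (d : ℕ) (αt σt : ℝ) (p₁ : EuclideanSpace ℝ (Fin d) → ℝ)
    (x : EuclideanSpace ℝ (Fin d)) : ℝ :=
  ∫ x₁, gaussDensity d (αt • x₁) σt x * p₁ x₁

/-- The denoiser `x̂₁(x,t) = ∫ x₁ p_t(x₁|x) dx₁` with posterior
`p_t(x₁|x) = N(x|α_t x₁, σ_t² I) p₁(x₁)/p_t(x)`. -/
noncomputable def denoiser (d : ℕ) (αt σt : ℝ) (p₁ : EuclideanSpace ℝ (Fin d) → ℝ)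
    (x : EuclideanSpace ℝ (Fin d)) : EuclideanSpace ℝ (Fin d) :=
  (marginal d αt σt p₁ x)⁻¹ • ∫ x₁, (gaussDensity d (αt • x₁) σt x * p₁ x₁) • x₁

set_option maxHeartbeats 1000000

section Aux
open Metric

-- t * exp(-t²/2) ≤ 1 for t ≥ 0
lemma aux_texp {t : ℝ} (ht : 0 ≤ t) : t * rexp (-(t^2/2)) ≤ 1 := by
  have h1 : t ≤ rexp (t^2/2) := by
    have h2 : t ≤ t^2/2 + 1 := by nlinarith [sq_nonneg (t - 1)]
    exact h2.trans (by linarith [Real.add_one_le_exp (t^2/2)])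
  calc t * rexp (-(t^2/2)) ≤ rexp (t^2/2) * rexp (-(t^2/2)) :=
        mul_le_mul_of_nonneg_right h1 (exp_pos _).le
    _ = 1 := by rw [← Real.exp_add]; simp

lemma aux_mom1 {a r : ℝ} (ha : 0 < a) (hr : 0 ≤ r) :
    r * rexp (-a * r^2) ≤ (Real.sqrt a)⁻¹ * rexp (-(a/2) * r^2) := by
  have hs : 0 < Real.sqrt a := Real.sqrt_pos.mpr ha
  have key := aux_texp (t := Real.sqrt a * r) (by positivity)
  have hsq : (Real.sqrt a * r)^2 = a * r^2 := by
    rw [mul_pow, Real.sq_sqrt ha.le]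
  rw [hsq] at key
  have h3 : rexp (-a * r^2) = rexp (-(a * r^2 / 2)) * rexp (-(a/2) * r^2) := by
    rw [← Real.exp_add]; ring_nf
  rw [h3]
  have h4 : r * rexp (-(a * r^2 / 2)) ≤ (Real.sqrt a)⁻¹ := by
    calc r * rexp (-(a*r^2/2)) = Real.sqrt a * r * rexp (-(a*r^2/2)) / Real.sqrt a := by
          field_simp
      _ ≤ 1 / Real.sqrt a := by gcongr
      _ = (Real.sqrt a)⁻¹ := one_div _
  calc r * (rexp (-(a*r^2/2)) * rexp (-(a/2)*r^2)) 
      = (r * rexp (-(a*r^2/2))) * rexp (-(a/2)*r^2) := by ring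
    _ ≤ (Real.sqrt a)⁻¹ * rexp (-(a/2)*r^2) :=
        mul_le_mul_of_nonneg_right h4 (exp_pos _).le

lemma aux_mom2 {a r : ℝ} (ha : 0 < a) (hr : 0 ≤ r) :
    r^2 * rexp (-a * r^2) ≤ (2/a) * rexp (-(a/2) * r^2) := by
  have key : (a/2 * r^2) * rexp (-(a/2 * r^2)) ≤ 1 := by
    have h2 : a/2*r^2 ≤ rexp (a/2*r^2) := le_trans (by linarith [Real.add_one_le_exp (a/2*r^2)]) le_rfl
    calc (a/2*r^2) * rexp (-(a/2*r^2)) ≤ rexp (a/2*r^2) * rexp (-(a/2*r^2)) :=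
          mul_le_mul_of_nonneg_right h2 (exp_pos _).le
      _ = 1 := by rw [← Real.exp_add]; simp
  have h3 : rexp (-a * r^2) = rexp (-(a/2 * r^2)) * rexp (-(a/2) * r^2) := by
    rw [← Real.exp_add]; ring_nf
  rw [h3]
  have h4 : r^2 * rexp (-(a/2*r^2)) ≤ 2/a := by
    have := mul_le_mul_of_nonneg_left key (le_of_lt (show (0:ℝ) < 2/a by positivity))
    calc r^2 * rexp (-(a/2*r^2)) = 2/a * ((a/2*r^2) * rexp (-(a/2*r^2))) := by field_simp
      _ ≤ 2/a * 1 := by exact mul_le_mul_of_nonneg_left key (by positivity)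
      _ = 2/a := mul_one _
  calc r^2 * (rexp (-(a/2*r^2)) * rexp (-(a/2)*r^2)) 
      = (r^2 * rexp (-(a/2*r^2))) * rexp (-(a/2)*r^2) := by ring
    _ ≤ 2/a * rexp (-(a/2)*r^2) := mul_le_mul_of_nonneg_right h4 (exp_pos _).le

variable {d : ℕ}

lemma integrable_gauss {a : ℝ} (ha : 0 < a) :
    Integrable (fun v : EuclideanSpace ℝ (Fin d) => rexp (-a * ‖v‖^2)) := by
  have h1 : Integrable (fun v : EuclideanSpace ℝ (Fin d) =>
      Complex.exp (-(a:ℂ) * (‖v‖:ℂ)^2 + (0:ℂ) * (inner ℝ (0:EuclideanSpace ℝ (Fin d)) v : ℝ))) :=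
    GaussianFourier.integrable_cexp_neg_mul_sq_norm_add (by simpa using ha) 0 0
  have h2 := h1.norm
  refine h2.congr (Eventually.of_forall fun v => ?_)
  simp only [zero_mul, add_zero]
  rw [show -(a:ℂ) * (‖v‖:ℂ)^2 = ((-a * ‖v‖^2 : ℝ) : ℂ) by push_cast; ring,
    ← Complex.ofReal_exp, Complex.norm_real, Real.norm_eq_abs, abs_of_pos (exp_pos _)]

lemma integral_gauss {a : ℝ} (ha : 0 < a) :
    ∫ v : EuclideanSpace ℝ (Fin d), rexp (-a * ‖v‖^2) = (π / a) ^ ((d:ℝ) / 2) := by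
  rw [GaussianFourier.integral_rexp_neg_mul_sq_norm ha]
  norm_num [finrank_euclideanSpace_fin]

lemma integrable_gauss1 {a : ℝ} (ha : 0 < a) :
    Integrable (fun v : EuclideanSpace ℝ (Fin d) => rexp (-a * ‖v‖^2) * ‖v‖) := by
  refine Integrable.mono' ((integrable_gauss (half_pos ha)).const_mul (Real.sqrt a)⁻¹)
    (Continuous.aestronglyMeasurable (by fun_prop)) (Eventually.of_forall fun v => ?_)
  rw [Real.norm_eq_abs, abs_of_nonneg (by positivity)]
  calc rexp (-a * ‖v‖^2) * ‖v‖ = ‖v‖ * rexp (-a * ‖v‖^2) := mul_comm _ _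
    _ ≤ (Real.sqrt a)⁻¹ * rexp (-(a/2) * ‖v‖^2) := aux_mom1 ha (norm_nonneg v)

lemma integrable_gauss2 {a : ℝ} (ha : 0 < a) :
    Integrable (fun v : EuclideanSpace ℝ (Fin d) => rexp (-a * ‖v‖^2) * ‖v‖^2) := by
  refine Integrable.mono' ((integrable_gauss (half_pos ha)).const_mul (2/a))
    (Continuous.aestronglyMeasurable (by fun_prop)) (Eventually.of_forall fun v => ?_)
  rw [Real.norm_eq_abs, abs_of_nonneg (by positivity)]
  calc rexp (-a * ‖v‖^2) * ‖v‖^2 = ‖v‖^2 * rexp (-a * ‖v‖^2) := mul_comm _ _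
    _ ≤ (2/a) * rexp (-(a/2) * ‖v‖^2) := aux_mom2 ha (norm_nonneg v)

lemma integral_gauss1_le {a : ℝ} (ha : 0 < a) :
    ∫ v : EuclideanSpace ℝ (Fin d), rexp (-a * ‖v‖^2) * ‖v‖
      ≤ (Real.sqrt a)⁻¹ * (π / (a/2)) ^ ((d:ℝ)/2) := by
  calc ∫ v : EuclideanSpace ℝ (Fin d), rexp (-a * ‖v‖^2) * ‖v‖
      ≤ ∫ v : EuclideanSpace ℝ (Fin d), (Real.sqrt a)⁻¹ * rexp (-(a/2) * ‖v‖^2) := by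
        refine integral_mono (integrable_gauss1 ha)
          ((integrable_gauss (half_pos ha)).const_mul _) fun v => ?_
        rw [mul_comm]
        exact aux_mom1 ha (norm_nonneg v)
    _ = (Real.sqrt a)⁻¹ * (π / (a/2)) ^ ((d:ℝ)/2) := by
        rw [integral_const_mul, integral_gauss (half_pos ha)]

lemma integral_gauss2_le {a : ℝ} (ha : 0 < a) :
    ∫ v : EuclideanSpace ℝ (Fin d), rexp (-a * ‖v‖^2) * ‖v‖^2
      ≤ (2/a) * (π / (a/2)) ^ ((d:ℝ)/2) := by
  calc ∫ v : EuclideanSpace ℝ (Fin d), rexp (-a * ‖v‖^2) * ‖v‖^2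
      ≤ ∫ v : EuclideanSpace ℝ (Fin d), (2/a) * rexp (-(a/2) * ‖v‖^2) := by
        refine integral_mono (integrable_gauss2 ha)
          ((integrable_gauss (half_pos ha)).const_mul _) fun v => ?_
        rw [mul_comm]
        exact aux_mom2 ha (norm_nonneg v)
    _ = (2/a) * (π / (a/2)) ^ ((d:ℝ)/2) := by
        rw [integral_const_mul, integral_gauss (half_pos ha)]

end Aux

open Metric in
lemma core (d : ℕ) (αv σv : ℝ) (hα1 : 1/2 ≤ αv) (hα2 : αv ≤ 2) (hσ : 0 < σv) (hσ2 : σv ≤ 1/2)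
    (ε m : ℝ) (hε : 0 < ε) (hm : 0 < m) (K : NNReal) (p₁ : EuclideanSpace ℝ (Fin d) → ℝ)
    (hnn : ∀ y, 0 ≤ p₁ y) (hlip : LipschitzWith K p₁) (x : EuclideanSpace ℝ (Fin d))
    (hball : ∀ y ∈ ball x ε, m ≤ p₁ y)
    (hbx : ‖αv⁻¹ • x - x‖ ≤ ε/2) (hσε : σv ≤ ε/2) :
    ‖denoiser d αv σv p₁ x - αv⁻¹ • x‖ ≤
      (Real.exp 2 * (16*π) ^ ((d:ℝ)/2) * (3*(p₁ x + K*ε) + 8*K)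
        / (m * (volume (ball (0:EuclideanSpace ℝ (Fin d)) 1)).toReal)) * σv := by
  have hα0 : 0 < αv := lt_of_lt_of_le (by norm_num) hα1
  set b : EuclideanSpace ℝ (Fin d) := αv⁻¹ • x with hb_def
  set a : ℝ := αv^2 / (2*σv^2) with ha_def
  have ha : 0 < a := by positivity
  set c : ℝ := (2*π*σv^2) ^ (-(d:ℝ)/2) with hc_def
  have hc : 0 < c := Real.rpow_pos_of_pos (by positivity) _
  set ω : ℝ := (volume (ball (0:EuclideanSpace ℝ (Fin d)) 1)).toReal with hω_def
  have hω : 0 < ω := ENNReal.toReal_pos (measure_ball_pos volume _ one_pos).ne'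
    measure_ball_lt_top.ne
  -- rewrite the Gaussian density
  have hg : ∀ x₁ : EuclideanSpace ℝ (Fin d), gaussDensity d (αv • x₁) σv x = c * rexp (-a * ‖x₁ - b‖^2) := by
    intro x₁
    unfold gaussDensity
    congr 1
    have h1 : x - αv • x₁ = αv • (b - x₁) := by
      rw [smul_sub, hb_def, smul_smul, mul_inv_cancel₀ hα0.ne', one_smul]
    rw [h1, norm_smul, Real.norm_eq_abs, abs_of_pos hα0, norm_sub_rev]
    congr 1
    rw [ha_def, mul_pow]
    field_simp
  -- Lipschitz pointwise bound
  have hpb : ∀ y : EuclideanSpace ℝ (Fin d), p₁ y ≤ p₁ b + K * ‖y - b‖ := by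
    intro y
    have h := hlip.dist_le_mul y b
    rw [Real.dist_eq, dist_eq_norm] at h
    have := abs_le.mp h
    linarith [this.1, this.2]
  have hp₁b : p₁ b ≤ p₁ x + K * ε := by
    have h := hlip.dist_le_mul b x
    rw [Real.dist_eq, dist_eq_norm] at h
    have h2 := (abs_le.mp h).2
    have : (K:ℝ) * ‖b - x‖ ≤ K * ε := by
      apply mul_le_mul_of_nonneg_left (le_trans hbx (by linarith)) K.coe_nonneg
    linarith
  have hp₁b0 : 0 ≤ p₁ b := hnn b
  -- continuity
  have hp₁c : Continuous p₁ := hlip.continuous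
  -- notation for the density
  set g : EuclideanSpace ℝ (Fin d) → ℝ := fun x₁ => c * rexp (-a * ‖x₁ - b‖^2) with hgdef
  have hgc : Continuous g := by fun_prop
  have hgnn : ∀ x₁, 0 ≤ g x₁ := fun x₁ => by positivity
  -- shifted integrability
  have hS0 : Integrable (fun x₁ : EuclideanSpace ℝ (Fin d) => rexp (-a * ‖x₁ - b‖^2)) :=
    (integrable_gauss ha).comp_sub_right b
  have hS1 : Integrable (fun x₁ : EuclideanSpace ℝ (Fin d) => rexp (-a * ‖x₁ - b‖^2) * ‖x₁ - b‖) :=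
    (integrable_gauss1 ha).comp_sub_right b
  have hS2 : Integrable (fun x₁ : EuclideanSpace ℝ (Fin d) => rexp (-a * ‖x₁ - b‖^2) * ‖x₁ - b‖^2) :=
    (integrable_gauss2 ha).comp_sub_right b
  -- integrability of g * p₁
  have hD' : Integrable (fun x₁ : EuclideanSpace ℝ (Fin d) => g x₁ * p₁ x₁) := by
    refine Integrable.mono' ((hS0.const_mul (c * p₁ b)).add (hS1.const_mul (c * K)))
      (Continuous.aestronglyMeasurable (by fun_prop)) (Eventually.of_forall fun y => ?_)
    rw [Real.norm_eq_abs, abs_of_nonneg (mul_nonneg (hgnn y) (hnn y))]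
    have h1 := hpb y
    have h2 : (0:ℝ) ≤ rexp (-a * ‖y - b‖^2) := (exp_pos _).le
    have h3 : (0:ℝ) ≤ ‖y - b‖ := norm_nonneg _
    simp only [hgdef, Pi.add_apply]
    nlinarith [hnn y, K.coe_nonneg, mul_le_mul_of_nonneg_left h1 (mul_nonneg hc.le h2)]
  -- integrability of (g p₁) • (x₁ - b)
  have hV2 : Integrable (fun x₁ : EuclideanSpace ℝ (Fin d) => (g x₁ * p₁ x₁) • (x₁ - b)) := by
    refine Integrable.mono' ((hS1.const_mul (c * p₁ b)).add (hS2.const_mul (c * K)))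
      (Continuous.aestronglyMeasurable (by fun_prop)) (Eventually.of_forall fun y => ?_)
    rw [norm_smul, Real.norm_eq_abs, abs_of_nonneg (mul_nonneg (hgnn y) (hnn y))]
    have h1 := hpb y
    have h2 : (0:ℝ) ≤ rexp (-a * ‖y - b‖^2) := (exp_pos _).le
    have h3 : (0:ℝ) ≤ ‖y - b‖ := norm_nonneg _
    simp only [hgdef, Pi.add_apply]
    nlinarith [hnn y, K.coe_nonneg,
      mul_le_mul_of_nonneg_left h1 (by positivity : (0:ℝ) ≤ c * rexp (-a * ‖y - b‖^2) * ‖y - b‖)]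
  -- integrability of (g p₁) • x₁
  have hV : Integrable (fun x₁ : EuclideanSpace ℝ (Fin d) => (g x₁ * p₁ x₁) • x₁) := by
    have : (fun x₁ : EuclideanSpace ℝ (Fin d) => (g x₁ * p₁ x₁) • x₁)
        = fun x₁ => (g x₁ * p₁ x₁) • (x₁ - b) + (g x₁ * p₁ x₁) • b := by
      funext x₁; rw [← smul_add]; congr 1; abel
    rw [this]
    exact hV2.add (hD'.smul_const b)
  -- abbreviations
  set D : ℝ := ∫ x₁, g x₁ * p₁ x₁ with hD_def
  set N : EuclideanSpace ℝ (Fin d) := ∫ x₁, (g x₁ * p₁ x₁) • (x₁ - b) with hN_def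
  -- marginal = D
  have hmarg : marginal d αv σv p₁ x = D := by
    unfold marginal; congr 1; funext x₁; rw [hg x₁]
  -- lower bound on D
  have hDlb : c * rexp (-2) * m * (σv^d * ω) ≤ D := by
    have hsub : ball b σv ⊆ ball x ε := by
      intro y hy
      rw [mem_ball] at hy ⊢
      have h1 : dist y x ≤ dist y b + dist b x := dist_triangle y b x
      have h2 : dist b x = ‖b - x‖ := by rw [dist_eq_norm]
      linarith [hy, hbx, h2 ▸ le_refl (dist b x)]
    have hpt : ∀ y ∈ ball b σv, c * rexp (-2) * m ≤ g y * p₁ y := by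
      intro y hy
      have h1 : m ≤ p₁ y := hball y (hsub hy)
      have h2 : rexp (-2) ≤ rexp (-a * ‖y - b‖^2) := by
        apply Real.exp_le_exp.mpr
        have h3 : ‖y - b‖ < σv := by rw [← dist_eq_norm]; exact mem_ball.mp hy
        have h4 : a * ‖y - b‖^2 ≤ a * σv^2 := by
          apply mul_le_mul_of_nonneg_left ?_ ha.le
          nlinarith [norm_nonneg (y - b)]
        have h5 : a * σv^2 ≤ 2 := by
          have : a * σv^2 = αv^2/2 := by rw [ha_def]; field_simp
          rw [this]; nlinarith
        linarith
      calc c * rexp (-2) * m ≤ c * rexp (-a * ‖y - b‖^2) * p₁ y := by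
            apply mul_le_mul (mul_le_mul_of_nonneg_left h2 hc.le) h1 hm.le
            positivity
        _ = g y * p₁ y := rfl
    have hvol : (volume (ball b σv)).toReal = σv^d * ω := by
      rw [Measure.addHaar_ball_of_pos volume b hσ, finrank_euclideanSpace_fin,
        ENNReal.toReal_mul, ENNReal.toReal_ofReal (by positivity)]
    calc c * rexp (-2) * m * (σv^d * ω)
        = (volume (ball b σv)).toReal • (c * rexp (-2) * m) := by
          rw [hvol]; simp [smul_eq_mul]; ring
      _ = ∫ _ in ball b σv, c * rexp (-2) * m := (setIntegral_const _).symm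
      _ ≤ ∫ y in ball b σv, g y * p₁ y := by
          apply setIntegral_mono_on (integrableOn_const measure_ball_lt_top.ne)
            (hD'.integrableOn) measurableSet_ball hpt
      _ ≤ D := setIntegral_le_integral hD' (Eventually.of_forall fun y =>
          mul_nonneg (hgnn y) (hnn y))
  have hDpos : 0 < D := lt_of_lt_of_le (by positivity) hDlb
  -- denoiser identity
  have hden : denoiser d αv σv p₁ x - b = D⁻¹ • N := by
    unfold denoiser
    rw [hmarg]
    have hintrw : (∫ x₁, (gaussDensity d (αv • x₁) σv x * p₁ x₁) • x₁ : EuclideanSpace ℝ (Fin d))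
        = ∫ x₁, (g x₁ * p₁ x₁) • x₁ := by congr 1; funext x₁; rw [hg x₁]
    rw [hintrw]
    have hsplit : (∫ x₁, (g x₁ * p₁ x₁) • x₁ : EuclideanSpace ℝ (Fin d)) = N + D • b := by
      have h1 : ∀ x₁ : EuclideanSpace ℝ (Fin d), (g x₁ * p₁ x₁) • x₁
          = (g x₁ * p₁ x₁) • (x₁ - b) + (g x₁ * p₁ x₁) • b := by
        intro x₁; rw [← smul_add]; congr 1; abel
      rw [show (fun x₁ : EuclideanSpace ℝ (Fin d) => (g x₁ * p₁ x₁) • x₁)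
          = fun x₁ => (g x₁ * p₁ x₁) • (x₁ - b) + (g x₁ * p₁ x₁) • b from funext h1,
        integral_add hV2 (hD'.smul_const b), integral_smul_const]
    rw [hsplit, smul_add, smul_smul, inv_mul_cancel₀ hDpos.ne', one_smul, add_sub_cancel_right]
  -- norm bound on N
  have hNbound : ‖N‖ ≤ c * p₁ b * (∫ v : EuclideanSpace ℝ (Fin d), rexp (-a * ‖v‖^2) * ‖v‖)
      + c * K * (∫ v : EuclideanSpace ℝ (Fin d), rexp (-a * ‖v‖^2) * ‖v‖^2) := by
    have h1 : ‖N‖ ≤ ∫ x₁, ‖(g x₁ * p₁ x₁) • (x₁ - b)‖ := norm_integral_le_integral_norm _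
    have h2 : ∫ x₁, ‖(g x₁ * p₁ x₁) • (x₁ - b)‖
        ≤ ∫ x₁ : EuclideanSpace ℝ (Fin d), ((c * p₁ b) * (rexp (-a * ‖x₁ - b‖^2) * ‖x₁ - b‖)
            + (c * K) * (rexp (-a * ‖x₁ - b‖^2) * ‖x₁ - b‖^2)) := by
      refine integral_mono hV2.norm ((hS1.const_mul _).add (hS2.const_mul _)) fun y => ?_
      rw [norm_smul, Real.norm_eq_abs, abs_of_nonneg (mul_nonneg (hgnn y) (hnn y))]
      have h1 := hpb y
      have h2 : (0:ℝ) ≤ rexp (-a * ‖y - b‖^2) := (exp_pos _).le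
      have h3 : (0:ℝ) ≤ ‖y - b‖ := norm_nonneg _
      simp only [hgdef, Pi.add_apply]
      nlinarith [hnn y, K.coe_nonneg,
        mul_le_mul_of_nonneg_left h1 (by positivity : (0:ℝ) ≤ c * rexp (-a * ‖y - b‖^2) * ‖y - b‖)]
    have h3 : ∫ x₁ : EuclideanSpace ℝ (Fin d), ((c * p₁ b) * (rexp (-a * ‖x₁ - b‖^2) * ‖x₁ - b‖)
            + (c * K) * (rexp (-a * ‖x₁ - b‖^2) * ‖x₁ - b‖^2))
        = c * p₁ b * (∫ v : EuclideanSpace ℝ (Fin d), rexp (-a * ‖v‖^2) * ‖v‖)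
          + c * K * (∫ v : EuclideanSpace ℝ (Fin d), rexp (-a * ‖v‖^2) * ‖v‖^2) := by
      rw [integral_add ((hS1.const_mul _)) ((hS2.const_mul _)), integral_const_mul,
        integral_const_mul]
      congr 2
      · exact integral_sub_right_eq_self (fun v : EuclideanSpace ℝ (Fin d) => rexp (-a * ‖v‖^2) * ‖v‖) b
      · exact integral_sub_right_eq_self (fun v : EuclideanSpace ℝ (Fin d) => rexp (-a * ‖v‖^2) * ‖v‖^2) b
    linarith
  -- moment bounds
  set Q : ℝ := (π / (a/2)) ^ ((d:ℝ)/2) with hQ_def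
  have hQpos : 0 ≤ Q := Real.rpow_nonneg (by positivity) _
  set T : ℝ := (16*π) ^ ((d:ℝ)/2) * σv^d with hT_def
  have hTpos : 0 < T := by positivity
  have hQT : Q ≤ T := by
    have hbase : π/(a/2) ≤ 16*π*σv^2 := by
      have h1 : π/(a/2) = 4*π*σv^2/αv^2 := by rw [ha_def]; field_simp; ring
      rw [h1, div_le_iff₀ (by positivity)]
      nlinarith [Real.pi_pos, sq_nonneg σv, sq_nonneg (2*αv - 1),
        mul_nonneg (mul_nonneg Real.pi_pos.le (sq_nonneg σv)) (show (0:ℝ) ≤ 4*αv^2 - 1 by nlinarith)]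
    calc Q ≤ (16*π*σv^2) ^ ((d:ℝ)/2) :=
          Real.rpow_le_rpow (by positivity) hbase (by positivity)
      _ = T := by
          rw [hT_def, Real.mul_rpow (by positivity) (by positivity)]
          congr 1
          rw [← Real.rpow_natCast σv 2, ← Real.rpow_mul hσ.le,
            show ((2:ℕ):ℝ) * ((d:ℝ)/2) = (d:ℝ) by push_cast; ring, Real.rpow_natCast]
  have hsa : (Real.sqrt a)⁻¹ ≤ 3*σv := by
    have h1 : (3*σv)⁻¹ ≤ Real.sqrt a := by
      rw [show a = αv^2/(2*σv^2) from ha_def,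
        Real.le_sqrt (by positivity) (by positivity)]
      have h2 : ((3*σv)⁻¹)^2 = 1/(9*σv^2) := by rw [inv_pow]; rw [one_div]; congr 1; ring
      rw [h2, div_le_div_iff₀ (by positivity) (by positivity)]
      nlinarith [sq_nonneg σv, sq_nonneg (2*αv - 1)]
    calc (Real.sqrt a)⁻¹ ≤ ((3*σv)⁻¹)⁻¹ := by
          apply inv_anti₀ (by positivity) h1
      _ = 3*σv := inv_inv _
  have h2a : 2/a ≤ 8*σv := by
    have h1 : 2/a = 4*σv^2/αv^2 := by rw [ha_def]; field_simp; ring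
    rw [h1, div_le_iff₀ (by positivity)]
    nlinarith [sq_nonneg σv, sq_nonneg (2*αv - 1), mul_pos hσ hσ]
  have hI1' : (∫ v : EuclideanSpace ℝ (Fin d), rexp (-a * ‖v‖^2) * ‖v‖) ≤ 3*σv * T :=
    le_trans (integral_gauss1_le ha)
      (mul_le_mul hsa hQT hQpos (by positivity))
  have hI2' : (∫ v : EuclideanSpace ℝ (Fin d), rexp (-a * ‖v‖^2) * ‖v‖^2) ≤ 8*σv * T :=
    le_trans (integral_gauss2_le ha)
      (mul_le_mul h2a hQT hQpos (by positivity))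
  have hNb2 : ‖N‖ ≤ c * ((3*(p₁ x + K*ε) + 8*K) * (T * σv)) := by
    have h1 : c * p₁ b * (∫ v : EuclideanSpace ℝ (Fin d), rexp (-a * ‖v‖^2) * ‖v‖)
        ≤ c * p₁ b * (3*σv*T) :=
      mul_le_mul_of_nonneg_left hI1' (mul_nonneg hc.le hp₁b0)
    have h2 : c * K * (∫ v : EuclideanSpace ℝ (Fin d), rexp (-a * ‖v‖^2) * ‖v‖^2)
        ≤ c * K * (8*σv*T) :=
      mul_le_mul_of_nonneg_left hI2' (mul_nonneg hc.le K.coe_nonneg)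
    have h3 : c * p₁ b * (3*σv*T) + c * K * (8*σv*T)
        ≤ c * ((3*(p₁ x + K*ε) + 8*K) * (T * σv)) := by
      nlinarith [mul_le_mul_of_nonneg_left hp₁b
        (by positivity : (0:ℝ) ≤ c * (3*σv*T))]
    linarith [hNbound]
  -- conclusion
  calc ‖denoiser d αv σv p₁ x - b‖ = D⁻¹ * ‖N‖ := by
        rw [hden, norm_smul, Real.norm_eq_abs, abs_of_pos (inv_pos.mpr hDpos)]
    _ ≤ (c * rexp (-2) * m * (σv^d * ω))⁻¹
          * (c * ((3*(p₁ x + K*ε) + 8*K) * (T * σv))) := by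
        apply mul_le_mul ?_ hNb2 (norm_nonneg _) (by positivity)
        exact inv_anti₀ (by positivity) hDlb
    _ = rexp 2 * (16*π) ^ ((d:ℝ)/2) * (3*(p₁ x + K*ε) + 8*K) / (m * ω) * σv := by
        rw [hT_def, Real.exp_neg]
        have hσd : (0:ℝ) < σv^d := by positivity
        field_simp


/-- Denoiser asymptotics: for a Lipschitz data density `p₁` bounded below by a positive
constant near `x`, with `σ_t → 0` and `α_t → 1` as `t → 1⁻`, the denoiser satisfies
`x̂₁(x,t) = x/α_t + O(σ_t)`. -/
theorem denoiser_asymptotics (d : ℕ) (α σ : ℝ → ℝ)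
    (hσ0 : Tendsto σ (nhdsWithin 1 (Set.Iio 1)) (nhds 0))
    (hα1 : Tendsto α (nhdsWithin 1 (Set.Iio 1)) (nhds 1))
    (hσpos : ∀ᶠ t in nhdsWithin 1 (Set.Iio 1), 0 < σ t)
    (hαpos : ∀ᶠ t in nhdsWithin 1 (Set.Iio 1), 0 < α t)
    (K : NNReal) (p₁ : EuclideanSpace ℝ (Fin d) → ℝ)
    (hp₁_nonneg : ∀ x₁, 0 ≤ p₁ x₁) (hp₁_lip : LipschitzWith K p₁)
    (x : EuclideanSpace ℝ (Fin d))
    (hlb : ∃ ε > (0 : ℝ), ∃ m > (0 : ℝ), ∀ y ∈ Metric.ball x ε, m ≤ p₁ y) :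
    ∃ C > (0 : ℝ), ∀ᶠ t in nhdsWithin 1 (Set.Iio 1),
      ‖denoiser d (α t) (σ t) p₁ x - (α t)⁻¹ • x‖ ≤ C * σ t := by
  obtain ⟨ε, hε, m, hm, hball⟩ := hlb
  set ω : ℝ := (volume (Metric.ball (0:EuclideanSpace ℝ (Fin d)) 1)).toReal with hω_def
  set C₀ : ℝ := Real.exp 2 * (16*π) ^ ((d:ℝ)/2) * (3*(p₁ x + K*ε) + 8*K) / (m * ω)
    with hC₀_def
  refine ⟨max C₀ 1, lt_of_lt_of_le one_pos (le_max_right _ _), ?_⟩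
  have hA : ∀ᶠ t in nhdsWithin 1 (Set.Iio 1), α t ∈ Set.Icc (1/2 : ℝ) 2 :=
    hα1 (Icc_mem_nhds (by norm_num) (by norm_num))
  have hB : ∀ᶠ t in nhdsWithin 1 (Set.Iio 1), σ t < min (1/2) (ε/2) :=
    hσ0 (Iio_mem_nhds (lt_min (by norm_num) (by positivity)))
  have hC : ∀ᶠ t in nhdsWithin 1 (Set.Iio 1), ‖(α t)⁻¹ • x - x‖ < ε/2 := by
    have ht : Tendsto (fun t => ‖(α t)⁻¹ • x - x‖) (nhdsWithin 1 (Set.Iio 1))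
        (nhds ‖((1:ℝ))⁻¹ • x - x‖) :=
      (((hα1.inv₀ one_ne_zero).smul_const x).sub tendsto_const_nhds).norm
    have h0 : ‖((1:ℝ))⁻¹ • x - x‖ = 0 := by simp
    rw [h0] at ht
    exact ht (Iio_mem_nhds (half_pos hε))
  filter_upwards [hσpos, hA, hB, hC] with t h1 h2 h3 h4
  have key := core d (α t) (σ t) h2.1 h2.2 h1
    (le_of_lt (lt_of_lt_of_le h3 (min_le_left _ _))) ε m hε hm K p₁ hp₁_nonneg hp₁_lip x
    hball (le_of_lt h4) (le_of_lt (lt_of_lt_of_le h3 (min_le_right _ _)))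
  exact key.trans (mul_le_mul_of_nonneg_right (le_max_left _ _) h1.le)
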